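/- Let (Ω, F, (F_t), P) be a filtered probability space carrying a standard Brownian motion W with natural (augmented) filtration, H a separable Hilbert space, and p ∈ [1,∞). Then the image under the map u ↦ ∫₀ᵀ u(t) dt of the space L^p_F(Ω; L¹(0,T;H)) of progressively measurable processes is dense in L^p_{F_T}(Ω; H). -/

import Mathlib

open MeasureTheory ProbabilityTheory
open scoped ENNReal NNReal

/-- A standard one-dimensional Brownian motion `W` on `(Ω, μ)` whose filtration `F`
is the natural filtration of `W` augmented by the `μ`-null sets. -/
def IsStdBM {Ω : Type*} {mΩ : MeasurableSpace Ω} (μ : Measure Ω)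
    (F : Filtration ℝ mΩ) (W : ℝ → Ω → ℝ) : Prop :=
  (∀ t, Measurable (W t)) ∧
  (∀ ω, W 0 ω = 0) ∧
  (∀ ω, Continuous fun t => W t ω) ∧
  (∀ s t : ℝ, 0 ≤ s → s ≤ t →
    μ.map (fun ω => W t ω - W s ω) = gaussianReal 0 (Real.toNNReal (t - s))) ∧
  (∀ s t : ℝ, 0 ≤ s → s ≤ t →
    Indep (MeasurableSpace.comap (fun ω => W t ω - W s ω) inferInstance) (F s) μ) ∧
  (∀ t : ℝ, (F t : MeasurableSpace Ω) =
    (⨆ r ∈ Set.Icc (0:ℝ) t, MeasurableSpace.comap (W r) inferInstance) ⊔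
      MeasurableSpace.generateFrom {A : Set Ω | MeasurableSet[mΩ] A ∧ μ A = 0})

section AuxLemmas

open Filter Set
open scoped Topology

variable {Ω : Type*} {mΩ : MeasurableSpace Ω} {μ : Measure Ω}
variable {H : Type*} [NormedAddCommGroup H] [NormedSpace ℝ H] [CompleteSpace H]

private lemma aux_condexp_abs_le (ℱ : Filtration ℕ mΩ) [IsFiniteMeasure μ] {A : Set Ω} (n : ℕ) :
    ∀ᵐ x ∂μ, |(μ[A.indicator (fun _ => (1:ℝ))|ℱ n]) x| ≤ 1 := by
  have h0 : (0 : Ω → ℝ) ≤ᵐ[μ] μ[A.indicator (fun _ => (1:ℝ))|ℱ n] :=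
    condExp_nonneg (Eventually.of_forall fun x => Set.indicator_nonneg (fun _ _ => zero_le_one) x)
  by_cases hi : Integrable (A.indicator (fun _ => (1:ℝ))) μ
  · have h1 : μ[A.indicator (fun _ => (1:ℝ))|ℱ n] ≤ᵐ[μ] μ[(fun _ => (1:ℝ))|ℱ n] :=
      condExp_mono hi (integrable_const 1)
        (Eventually.of_forall fun x => Set.indicator_le_self' (fun _ _ => zero_le_one) x |>.trans
          (by by_cases h : x ∈ A <;> simp [h]))
    rw [condExp_const (ℱ.le n) (1:ℝ)] at h1
    filter_upwards [h0, h1] with x hx0 hx1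
    simp only [Pi.zero_apply] at hx0
    rw [abs_le]
    exact ⟨by linarith, hx1⟩
  · rw [condExp_of_not_integrable hi]
    filter_upwards with x
    simp

private lemma aux_condexp_indicator (ℱ : Filtration ℕ mΩ) [IsFiniteMeasure μ] {A : Set Ω}
    (hA : MeasurableSet[⨆ n, (ℱ n : MeasurableSpace Ω)] A) {q : ℝ≥0∞} (hq1 : 1 ≤ q)
    (hqt : q ≠ ∞) {ε : ℝ≥0∞} (hε : ε ≠ 0) :
    ∃ n, eLpNorm ((μ[A.indicator (fun _ => (1:ℝ))|ℱ n]) - A.indicator (fun _ => (1:ℝ))) q μ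
      < ε := by
  classical
  have hle : (⨆ n, (ℱ n : MeasurableSpace Ω)) ≤ mΩ := iSup_le fun n => ℱ.le n
  set g : Ω → ℝ := A.indicator fun _ => 1 with hgdef
  have hgm : StronglyMeasurable[⨆ n, (ℱ n : MeasurableSpace Ω)] g :=
    stronglyMeasurable_const.indicator hA
  have hgi : Integrable g μ := (integrable_const (1:ℝ)).indicator (hle _ hA)
  have hq0 : q ≠ 0 := fun h => by simp [h] at hq1
  have hr : 0 < q.toReal := ENNReal.toReal_pos hq0 hqt
  -- pointwise a.e. convergence
  have h_ae := Integrable.tendsto_ae_condExp hgi hgm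
  -- dominated convergence for the lintegrals
  set Fn : ℕ → Ω → ℝ≥0∞ :=
    fun n x => (‖(μ[g|ℱ n]) x - g x‖₊ : ℝ≥0∞) ^ q.toReal with hFn
  have hFnm : ∀ n, Measurable (Fn n) := by
    intro n
    have h1 : Measurable ((μ[g|ℱ n]) - g) :=
      ((stronglyMeasurable_condExp.mono (ℱ.le n)).measurable.sub (hgm.mono hle).measurable)
    exact (h1.nnnorm.coe_nnreal_ennreal).pow_const _
  have h_bound : ∀ n, ∀ᵐ x ∂μ, Fn n x ≤ (2:ℝ≥0∞) ^ q.toReal := by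
    intro n
    filter_upwards [aux_condexp_abs_le ℱ (A := A) n] with x hx
    refine ENNReal.rpow_le_rpow ?_ hr.le
    have hg01 : |g x| ≤ 1 := by
      by_cases h : x ∈ A <;> simp [hgdef, h]
    have : ‖(μ[g|ℱ n]) x - g x‖ ≤ 2 := by
      rw [Real.norm_eq_abs]
      calc |(μ[g|ℱ n]) x - g x| ≤ |(μ[g|ℱ n]) x| + |g x| := abs_sub _ _
        _ ≤ 2 := by linarith
    calc (‖(μ[g|ℱ n]) x - g x‖₊ : ℝ≥0∞) = ENNReal.ofReal ‖(μ[g|ℱ n]) x - g x‖ :=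
          (ofReal_norm _).symm
      _ ≤ ENNReal.ofReal 2 := ENNReal.ofReal_le_ofReal this
      _ = 2 := by norm_num
  have h_fin : ∫⁻ _, (2:ℝ≥0∞) ^ q.toReal ∂μ ≠ ∞ := by
    rw [lintegral_const]
    exact ENNReal.mul_ne_top (ENNReal.rpow_ne_top_of_nonneg hr.le (by norm_num))
      (measure_ne_top μ _)
  have h_lim : ∀ᵐ x ∂μ, Tendsto (fun n => Fn n x) atTop (𝓝 0) := by
    filter_upwards [h_ae] with x hx
    have h1 : Tendsto (fun n => (μ[g|ℱ n]) x - g x) atTop (𝓝 0) := by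
      simpa using hx.sub (tendsto_const_nhds (x := g x))
    have h2 : Tendsto (fun n => (‖(μ[g|ℱ n]) x - g x‖₊ : ℝ≥0∞)) atTop (𝓝 0) := by
      rw [show (0:ℝ≥0∞) = ((0:ℝ≥0) : ℝ≥0∞) by simp, ENNReal.tendsto_coe]
      simpa [Function.comp_def] using (continuous_nnnorm.tendsto (0:ℝ)).comp h1
    have h3 := (ENNReal.continuous_rpow_const (y := q.toReal)).tendsto 0 |>.comp h2
    simpa [ENNReal.zero_rpow_of_pos hr, Function.comp_def] using h3
  have h_tend : Tendsto (fun n => ∫⁻ x, Fn n x ∂μ) atTop (𝓝 0) := by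
    have := tendsto_lintegral_of_dominated_convergence _ hFnm h_bound h_fin h_lim
    simpa using this
  have hεr : (0:ℝ≥0∞) < ε ^ q.toReal := by
    rw [pos_iff_ne_zero]
    simp only [ne_eq, ENNReal.rpow_eq_zero_iff, not_or, not_and_or]
    exact ⟨Or.inl hε, Or.inr (by linarith)⟩
  obtain ⟨n, hn⟩ := (h_tend.eventually_lt_const hεr).exists
  refine ⟨n, ?_⟩
  rw [eLpNorm_eq_lintegral_rpow_enorm_toReal hq0 hqt]
  have : (∫⁻ x, Fn n x ∂μ) ^ (1 / q.toReal) < (ε ^ q.toReal) ^ (1 / q.toReal) :=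
    ENNReal.rpow_lt_rpow hn (by positivity)
  rwa [← ENNReal.rpow_mul, mul_one_div_cancel hr.ne', ENNReal.rpow_one] at this

private lemma aux_base (ℱ : Filtration ℕ mΩ) [IsFiniteMeasure μ] {A : Set Ω}
    (hA : MeasurableSet[⨆ n, (ℱ n : MeasurableSpace Ω)] A) (c : H) {q : ℝ≥0∞} (hq1 : 1 ≤ q)
    (hqt : q ≠ ∞) {ε : ℝ≥0∞} (hε : ε ≠ 0) :
    ∃ n, ∃ η : Ω → H, StronglyMeasurable[ℱ n] η ∧ MemLp η q μ ∧
      eLpNorm (η - A.indicator (fun _ => c)) q μ < ε := by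
  set g : Ω → ℝ := A.indicator fun _ => 1 with hgdef
  set b : ℝ≥0∞ := (‖c‖₊ : ℝ≥0∞) + 1 with hb
  have hb0 : b ≠ 0 := by simp [hb]
  have hbt : b ≠ ∞ := by simp [hb]
  set ε' : ℝ≥0∞ := (min ε 1) / (2 * b) with hε'
  have hm0 : (0:ℝ≥0∞) < min ε 1 := lt_min (pos_iff_ne_zero.2 hε) zero_lt_one
  have hε'0 : ε' ≠ 0 := by
    rw [hε', ne_eq, ENNReal.div_eq_zero_iff]
    push_neg
    exact ⟨hm0.ne', ENNReal.mul_ne_top (by norm_num) hbt⟩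
  obtain ⟨n, hn⟩ := aux_condexp_indicator (μ := μ) ℱ hA hq1 hqt hε'0
  refine ⟨n, fun x => (μ[g|ℱ n]) x • c, stronglyMeasurable_condExp.smul stronglyMeasurable_const,
    ?_, ?_⟩
  · refine MemLp.of_bound ((stronglyMeasurable_condExp.mono (ℱ.le n)).smul
      stronglyMeasurable_const).aestronglyMeasurable ‖c‖ ?_
    filter_upwards [aux_condexp_abs_le ℱ (A := A) n] with x hx
    rw [norm_smul, Real.norm_eq_abs]
    calc |(μ[g|ℱ n]) x| * ‖c‖ ≤ 1 * ‖c‖ := by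
          exact mul_le_mul_of_nonneg_right hx (norm_nonneg _)
      _ = ‖c‖ := one_mul _
  · have hdiff : (fun x => (μ[g|ℱ n]) x • c) - A.indicator (fun _ => c)
        = fun x => ((μ[g|ℱ n]) x - g x) • c := by
      funext x
      have : A.indicator (fun _ => c) x = g x • c := by
        by_cases h : x ∈ A <;> simp [hgdef, h]
      simp [this, sub_smul]
    rw [hdiff]
    have hle1 : eLpNorm (fun x => ((μ[g|ℱ n]) x - g x) • c) q μ
        ≤ ‖c‖₊ • eLpNorm ((μ[g|ℱ n]) - g) q μ := by
      refine eLpNorm_le_nnreal_smul_eLpNorm_of_ae_le_mul ?_ q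
      filter_upwards with x
      simp [nnnorm_smul, mul_comm]
    calc eLpNorm (fun x => ((μ[g|ℱ n]) x - g x) • c) q μ
        ≤ ‖c‖₊ • eLpNorm ((μ[g|ℱ n]) - g) q μ := hle1
      _ ≤ b * eLpNorm ((μ[g|ℱ n]) - g) q μ := by
          rw [ENNReal.smul_def, smul_eq_mul]
          exact mul_le_mul_left (by simp [hb, le_add_iff_nonneg_right]) _
      _ < b * ε' := ENNReal.mul_lt_mul_right hb0 hbt hn
      _ ≤ b * (min ε 1 / b) := by
          refine mul_le_mul_right (ENNReal.div_le_div_left ?_ _) _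
          exact le_mul_of_one_le_left zero_le one_le_two
      _ ≤ min ε 1 := ENNReal.mul_div_le
      _ ≤ ε := min_le_left _ _

private lemma aux_simple (ℱ : Filtration ℕ mΩ) [IsFiniteMeasure μ] {q : ℝ≥0∞} (hq1 : 1 ≤ q)
    (hqt : q ≠ ∞) (s : @SimpleFunc Ω (⨆ n, (ℱ n : MeasurableSpace Ω)) H) :
    ∀ ε : ℝ≥0∞, ε ≠ 0 → ∃ n, ∃ η : Ω → H, StronglyMeasurable[ℱ n] η ∧ MemLp η q μ ∧
      eLpNorm (η - ⇑s) q μ < ε := by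
  have hle : (⨆ n, (ℱ n : MeasurableSpace Ω)) ≤ mΩ := iSup_le fun n => ℱ.le n
  refine @SimpleFunc.induction Ω H (⨆ n, (ℱ n : MeasurableSpace Ω)) _
    (fun s => ∀ ε : ℝ≥0∞, ε ≠ 0 → ∃ n, ∃ η : Ω → H, StronglyMeasurable[ℱ n] η ∧ MemLp η q μ ∧
      eLpNorm (η - ⇑s) q μ < ε) ?_ ?_ s
  · intro c A hA ε hε
    obtain ⟨n, η, h1, h2, h3⟩ := aux_base (μ := μ) ℱ hA c hq1 hqt hε
    refine ⟨n, η, h1, h2, ?_⟩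
    classical
    simpa [SimpleFunc.coe_piecewise, SimpleFunc.coe_const, SimpleFunc.coe_zero,
      Set.piecewise_eq_indicator, ← Function.const_def] using h3
  · intro f g _ hf hg ε hε
    have hε2 : ε / 2 ≠ 0 := by
      simp [ENNReal.div_eq_zero_iff, hε]
    obtain ⟨n1, η1, h11, h12, h13⟩ := hf (ε / 2) hε2
    obtain ⟨n2, η2, h21, h22, h23⟩ := hg (ε / 2) hε2
    refine ⟨max n1 n2, η1 + η2, (h11.mono (ℱ.mono (le_max_left _ _))).add
      (h21.mono (ℱ.mono (le_max_right _ _))), h12.add h22, ?_⟩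
    have hrw : η1 + η2 - ⇑(f + g) = (η1 - ⇑f) + (η2 - ⇑g) := by
      funext x
      simp only [Pi.sub_apply, Pi.add_apply, SimpleFunc.coe_add]
      abel
    rw [hrw]
    calc eLpNorm ((η1 - ⇑f) + (η2 - ⇑g)) q μ
        ≤ eLpNorm (η1 - ⇑f) q μ + eLpNorm (η2 - ⇑g) q μ := by
          refine eLpNorm_add_le ?_ ?_ hq1
          · exact ((h11.mono (ℱ.le n1)).sub (f.stronglyMeasurable.mono hle)).aestronglyMeasurable
          · exact ((h21.mono (ℱ.le n2)).sub (g.stronglyMeasurable.mono hle)).aestronglyMeasurable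
      _ < ε / 2 + ε / 2 := ENNReal.add_lt_add h13 h23
      _ = ε := ENNReal.add_halves ε

private lemma aux_memLp (ℱ : Filtration ℕ mΩ) [IsFiniteMeasure μ] {q : ℝ≥0∞} (hq1 : 1 ≤ q)
    (hqt : q ≠ ∞) {ξ : Ω → H} (hξm : StronglyMeasurable[⨆ n, (ℱ n : MeasurableSpace Ω)] ξ)
    (hξp : MemLp ξ q μ) {ε : ℝ≥0∞} (hε : ε ≠ 0) :
    ∃ n, ∃ η : Ω → H, StronglyMeasurable[ℱ n] η ∧ MemLp η q μ ∧
      eLpNorm (η - ξ) q μ < ε := by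
  have hle : (⨆ n, (ℱ n : MeasurableSpace Ω)) ≤ mΩ := iSup_le fun n => ℱ.le n
  have hε2 : ε / 2 ≠ 0 := by simp [ENNReal.div_eq_zero_iff, hε]
  have hξν : MemLp ξ q (μ.trim hle) :=
    ⟨hξm.aestronglyMeasurable, by rw [eLpNorm_trim hle hξm]; exact hξp.2⟩
  obtain ⟨s, hs, -⟩ :=
    @MemLp.exists_simpleFunc_eLpNorm_sub_lt Ω (⨆ n, (ℱ n : MeasurableSpace Ω)) q H _ ξ
      (μ.trim hle) hξν hqt _ hε2
  have hsμ : eLpNorm (ξ - ⇑s) q μ < ε / 2 := by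
    rwa [← eLpNorm_trim hle (hξm.sub s.stronglyMeasurable)]
  obtain ⟨n, η, h1, h2, h3⟩ := aux_simple (μ := μ) ℱ hq1 hqt s (ε / 2) hε2
  refine ⟨n, η, h1, h2, ?_⟩
  have hrw : η - ξ = (η - ⇑s) + (⇑s - ξ) := by abel
  rw [hrw]
  calc eLpNorm ((η - ⇑s) + (⇑s - ξ)) q μ
      ≤ eLpNorm (η - ⇑s) q μ + eLpNorm (⇑s - ξ) q μ := by
        refine eLpNorm_add_le ?_ ?_ hq1
        · exact ((h1.mono (ℱ.le n)).sub (s.stronglyMeasurable.mono hle)).aestronglyMeasurable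
        · exact ((s.stronglyMeasurable.mono hle).sub (hξm.mono hle)).aestronglyMeasurable
    _ < ε / 2 + ε / 2 := ENNReal.add_lt_add h3 (by rwa [eLpNorm_sub_comm])
    _ = ε := ENNReal.add_halves ε

private lemma aux_t_mono {T : ℝ} (hT : 0 < T) : Monotone (fun n : ℕ => T - T / (n + 1)) := by
  intro i j hij
  have h1 : (0:ℝ) < i + 1 := by positivity
  have : T / (j + 1) ≤ T / (i + 1) := by
    apply div_le_div_of_nonneg_left hT.le h1
    exact_mod_cast by omega
  simp only []
  linarith

private lemma aux_t_lt {T : ℝ} (hT : 0 < T) (n : ℕ) : T - T / (n + 1) < T := by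
  have : (0:ℝ) < T / (n + 1) := by positivity
  linarith

private lemma aux_t_nonneg {T : ℝ} (hT : 0 < T) (n : ℕ) : 0 ≤ T - T / (n + 1) := by
  have h1 : (1:ℝ) ≤ n + 1 := by exact_mod_cast Nat.one_le_iff_ne_zero.mpr (by omega)
  have : T / (n + 1) ≤ T := div_le_self hT.le h1
  linarith

private lemma aux_t_tendsto (T : ℝ) :
    Tendsto (fun n : ℕ => T - T / (n + 1)) atTop (𝓝 T) := by
  have h : Tendsto (fun n : ℕ => T / (n + 1)) atTop (𝓝 0) := by
    have := tendsto_one_div_add_atTop_nhds_zero_nat (𝕜 := ℝ)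
    have h2 := this.const_mul T
    simpa [div_eq_mul_inv, mul_comm] using h2
  simpa using tendsto_const_nhds.sub h

private lemma aux_sup {F : Filtration ℝ mΩ} {W : ℝ → Ω → ℝ} (hW : IsStdBM μ F W) {T : ℝ}
    (hT : 0 < T) :
    (⨆ n : ℕ, (F (T - T / (n + 1)) : MeasurableSpace Ω)) = F T := by
  obtain ⟨hWm, hW0, hWc, hWg, hWi, hWf⟩ := hW
  set t : ℕ → ℝ := fun n => T - T / (n + 1) with ht
  set M : MeasurableSpace Ω := ⨆ n : ℕ, (F (t n) : MeasurableSpace Ω) with hM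
  refine le_antisymm (iSup_le fun n => F.mono (aux_t_lt hT n).le) ?_
  rw [hWf T]
  have hcom : ∀ n, MeasurableSpace.comap (W (t n)) inferInstance ≤ M := by
    intro n
    refine le_trans ?_ (le_iSup (fun n => (F (t n) : MeasurableSpace Ω)) n)
    rw [hWf (t n)]
    exact le_trans (le_iSup₂ (f := fun r _ => MeasurableSpace.comap (W r) inferInstance)
      (t n) ⟨aux_t_nonneg hT n, le_refl _⟩) le_sup_left
  refine sup_le ?_ ?_
  · refine iSup₂_le fun r hr => ?_
    rcases lt_or_eq_of_le hr.2 with hrT | hrT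
    · obtain ⟨n, hn⟩ := ((aux_t_tendsto _).eventually (eventually_gt_nhds hrT)).exists
      refine le_trans ?_ (le_iSup (fun n => (F (t n) : MeasurableSpace Ω)) n)
      rw [hWf (t n)]
      exact le_trans (le_iSup₂ (f := fun r' _ => MeasurableSpace.comap (W r') inferInstance)
        r ⟨hr.1, hn.le⟩) le_sup_left
    · subst hrT
      have hmeas : Measurable[M] (W r) := by
        refine measurable_of_tendsto_metrizable' atTop
          (fun n => measurable_iff_comap_le.mpr (hcom n)) ?_
        rw [tendsto_pi_nhds]
        intro ω
        exact ((hWc ω).tendsto r).comp (aux_t_tendsto _)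
      exact measurable_iff_comap_le.mp hmeas
  · refine le_trans ?_ (le_iSup (fun n => (F (t n) : MeasurableSpace Ω)) 0)
    rw [hWf (t 0)]
    exact le_sup_right

end AuxLemmas

/-- Proposition 1.1: the image of `L^p_F(Ω; L¹(0,T;H))` under the Bochner integration map
`u ↦ ∫₀ᵀ u(t) dt` is dense in `L^p_{F_T}(Ω;H)`. -/
theorem stmt2 {Ω H : Type*} {mΩ : MeasurableSpace Ω}
    [NormedAddCommGroup H] [InnerProductSpace ℝ H] [CompleteSpace H]
    [SecondCountableTopology H]
    (μ : Measure Ω) [IsProbabilityMeasure μ]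
    (F : Filtration ℝ mΩ) (W : ℝ → Ω → ℝ) (hW : IsStdBM μ F W)
    (T : ℝ) (hT : 0 < T) (p : ℝ) (hp : 1 ≤ p)
    (ξ : Ω → H) (hξm : StronglyMeasurable[F T] ξ) (hξp : MemLp ξ (ENNReal.ofReal p) μ) :
    ∀ ε > 0, ∃ u : ℝ → Ω → H, ProgMeasurable F u ∧
      (∫⁻ ω, (∫⁻ t in Set.Ioc (0:ℝ) T, (‖u t ω‖₊ : ℝ≥0∞)) ^ p ∂μ) ≠ ⊤ ∧
      (∫ ω, ‖(∫ t in Set.Ioc (0:ℝ) T, u t ω) - ξ ω‖ ^ p ∂μ) ^ (1 / p) < ε := by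
  intro ε hε
  set q : ℝ≥0∞ := ENNReal.ofReal p with hq
  have hq1 : 1 ≤ q := by rw [hq]; exact ENNReal.one_le_ofReal.mpr hp
  have hq0 : q ≠ 0 := (lt_of_lt_of_le zero_lt_one hq1).ne'
  have hqt : q ≠ ⊤ := ENNReal.ofReal_ne_top
  have hqr : q.toReal = p := ENNReal.toReal_ofReal (by linarith)
  set t : ℕ → ℝ := fun n => T - T / (n + 1) with ht
  set ℱ : Filtration ℕ mΩ :=
    ⟨fun n => F (t n), fun i j hij => F.mono (aux_t_mono hT hij), fun n => F.le _⟩ with hℱ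
  have hsup : (⨆ n, (ℱ n : MeasurableSpace Ω)) = F T := aux_sup hW hT
  have hξm' : StronglyMeasurable[⨆ n, (ℱ n : MeasurableSpace Ω)] ξ := by
    rw [hsup]; exact hξm
  have hεE : ENNReal.ofReal ε ≠ 0 := by
    simp [ENNReal.ofReal_eq_zero, not_le, hε]
  obtain ⟨n, η, hη1, hη2, hη3⟩ := aux_memLp (μ := μ) ℱ hq1 hqt hξm' hξp hεE
  set δ : ℝ := T - t n with hδdef
  have hδ : 0 < δ := by
    have := aux_t_lt hT n
    simp only [hδdef, ht]
    linarith
  have htn0 : 0 ≤ t n := aux_t_nonneg hT n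
  have hη1' : StronglyMeasurable[F (t n)] η := hη1
  refine ⟨fun s ω => Set.indicator (Set.Ioc (t n) T) (fun _ => δ⁻¹ • η ω) s, ?_, ?_, ?_⟩
  · -- progressive measurability
    intro r
    by_cases hr : t n < r
    · have hηr : StronglyMeasurable[F r] η := hη1'.mono (F.mono hr.le)
      have heq : (fun pq : Set.Iic r × Ω =>
            Set.indicator (Set.Ioc (t n) T) (fun _ => δ⁻¹ • η pq.2) (pq.1 : ℝ))
          = fun pq : Set.Iic r × Ω =>
            Set.indicator (Set.Ioc (t n) T) (fun _ => (1:ℝ)) (pq.1 : ℝ) • (δ⁻¹ • η pq.2) := by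
        funext pq
        by_cases h : (pq.1 : ℝ) ∈ Set.Ioc (t n) T <;> simp [h]
      show StronglyMeasurable[Subtype.instMeasurableSpace.prod (F r)]
        fun pq : Set.Iic r × Ω =>
          Set.indicator (Set.Ioc (t n) T) (fun _ => δ⁻¹ • η pq.2) (pq.1 : ℝ)
      rw [heq]
      refine StronglyMeasurable.smul ?_ ?_
      · refine Measurable.stronglyMeasurable ?_
        exact (measurable_const.indicator measurableSet_Ioc).comp
          (measurable_subtype_coe.comp measurable_fst)
      · exact (hηr.comp_measurable measurable_snd).const_smul _
    · push_neg at hr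
      have heq : (fun pq : Set.Iic r × Ω =>
            Set.indicator (Set.Ioc (t n) T) (fun _ => δ⁻¹ • η pq.2) (pq.1 : ℝ))
          = fun _ : Set.Iic r × Ω => (0 : H) := by
        funext pq
        refine Set.indicator_of_notMem ?_ _
        intro h
        exact absurd (lt_of_lt_of_le h.1 (le_trans pq.1.2 hr)) (lt_irrefl _)
      show StronglyMeasurable[Subtype.instMeasurableSpace.prod (F r)]
        fun pq : Set.Iic r × Ω =>
          Set.indicator (Set.Ioc (t n) T) (fun _ => δ⁻¹ • η pq.2) (pq.1 : ℝ)
      rw [heq]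
      exact stronglyMeasurable_const
  · -- finiteness of the L^p(L¹) norm
    have hinner : ∀ ω, (∫⁻ s in Set.Ioc (0:ℝ) T,
        (‖Set.indicator (Set.Ioc (t n) T) (fun _ => δ⁻¹ • η ω) s‖₊ : ℝ≥0∞))
        = (‖η ω‖₊ : ℝ≥0∞) := by
      intro ω
      have h1 : (fun s => (‖Set.indicator (Set.Ioc (t n) T) (fun _ => δ⁻¹ • η ω) s‖₊ : ℝ≥0∞))
          = Set.indicator (Set.Ioc (t n) T) (fun _ => (‖δ⁻¹ • η ω‖₊ : ℝ≥0∞)) := by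
        funext s
        by_cases h : s ∈ Set.Ioc (t n) T <;> simp [h]
      rw [h1, lintegral_indicator measurableSet_Ioc, Measure.restrict_restrict measurableSet_Ioc,
        lintegral_const, Measure.restrict_apply MeasurableSet.univ]
      rw [Set.univ_inter, Set.inter_eq_self_of_subset_left (Set.Ioc_subset_Ioc_left htn0),
        Real.volume_Ioc]
      have h2 : (‖δ⁻¹ • η ω‖₊ : ℝ≥0∞) = ENNReal.ofReal δ⁻¹ * (‖η ω‖₊ : ℝ≥0∞) := by
        rw [← enorm_eq_nnnorm, ← enorm_eq_nnnorm, ← ofReal_norm, ← ofReal_norm, norm_smul,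
          Real.norm_eq_abs, abs_of_pos (inv_pos.mpr hδ),
          ENNReal.ofReal_mul (inv_nonneg.mpr hδ.le)]
      rw [h2, mul_right_comm, ← ENNReal.ofReal_mul (inv_nonneg.mpr hδ.le)]
      have h3 : T - t n = δ := rfl
      rw [h3, inv_mul_cancel₀ hδ.ne', ENNReal.ofReal_one, one_mul]
    simp only [hinner]
    intro htop
    have h2 := hη2.2
    rw [eLpNorm_eq_lintegral_rpow_enorm_toReal hq0 hqt, hqr] at h2
    simp only [enorm_eq_nnnorm] at h2
    rw [htop] at h2
    rw [ENNReal.top_rpow_of_pos (by positivity : (0:ℝ) < 1 / p)] at h2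
    exact absurd h2 (lt_irrefl _)
  · -- the L^p estimate
    have hint : ∀ ω, (∫ s in Set.Ioc (0:ℝ) T,
        Set.indicator (Set.Ioc (t n) T) (fun _ => δ⁻¹ • η ω) s) = η ω := by
      intro ω
      rw [MeasureTheory.setIntegral_indicator measurableSet_Ioc,
        Set.inter_eq_self_of_subset_right (Set.Ioc_subset_Ioc_left htn0),
        MeasureTheory.setIntegral_const, measureReal_def, Real.volume_Ioc]
      have h3 : T - t n = δ := rfl
      rw [h3, ENNReal.toReal_ofReal hδ.le, smul_smul, mul_inv_cancel₀ hδ.ne', one_smul]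
    simp only [hint]
    have hmem : MemLp (η - ξ) q μ := hη2.sub hξp
    have heq := hmem.eLpNorm_eq_integral_rpow_norm hq0 hqt
    rw [heq, hqr] at hη3
    have hlt := (ENNReal.ofReal_lt_ofReal_iff hε).mp hη3
    simp only [Pi.sub_apply] at hlt
    rw [one_div]
    exact hlt
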